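/- arXiv:1004.1211 — 2 statements merged into one kernel-verified Lean document; each statement's English description precedes it below -/
import Mathlib

section
/- The open-type rewriting system on DCC^d types, given by orienting the equations (s^ℓ)^{ℓ'} → s^{ℓ⊔ℓ'}, unit^ℓ → unit, (s → t)^ℓ → s → t^ℓ, (s × t)^ℓ → (s^ℓ × t^ℓ), T̄_{ℓ'}(s)^ℓ → T̄_{ℓ'}(s^ℓ), and T̄_{ℓ'}(s)^ℓ → T̄_{ℓ'}(s) when ℓ ⊑ ℓ', is terminating: every sequence of rewrites from any type reaches a normal form in which qualifiers occur only on sum types. -/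
/-- DCC^d types. -/
inductive WTy (L : Type) where
  | unit : WTy L
  | fn : WTy L → WTy L → WTy L
  | prod : WTy L → WTy L → WTy L
  | sum : WTy L → WTy L → WTy L
  | wmon : L → WTy L → WTy L
  | open_ : L → WTy L → WTy L

/-- One-step rewriting by the oriented open-type equations,
applicable at any subterm position. -/
inductive Rw {L : Type} [SemilatticeSup L] [OrderBot L] : WTy L → WTy L → Prop where
  -- root rules
  | open_open (ℓ ℓ' : L) (s : WTy L) :
      Rw (.open_ ℓ' (.open_ ℓ s)) (.open_ (ℓ ⊔ ℓ') s)
  | open_unit (ℓ : L) : Rw (.open_ ℓ .unit) .unit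
  | open_fn (ℓ : L) (s t : WTy L) :
      Rw (.open_ ℓ (.fn s t)) (.fn s (.open_ ℓ t))
  | open_prod (ℓ : L) (s t : WTy L) :
      Rw (.open_ ℓ (.prod s t)) (.prod (.open_ ℓ s) (.open_ ℓ t))
  | open_wmon_push (ℓ ℓ' : L) (s : WTy L) :
      Rw (.open_ ℓ (.wmon ℓ' s)) (.wmon ℓ' (.open_ ℓ s))
  | open_wmon_drop (ℓ ℓ' : L) (s : WTy L) (h : ℓ ≤ ℓ') :
      Rw (.open_ ℓ (.wmon ℓ' s)) (.wmon ℓ' s)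
  -- congruence rules
  | fn_l {s s' : WTy L} (t : WTy L) : Rw s s' → Rw (.fn s t) (.fn s' t)
  | fn_r (s : WTy L) {t t' : WTy L} : Rw t t' → Rw (.fn s t) (.fn s t')
  | prod_l {s s' : WTy L} (t : WTy L) : Rw s s' → Rw (.prod s t) (.prod s' t)
  | prod_r (s : WTy L) {t t' : WTy L} : Rw t t' → Rw (.prod s t) (.prod s t')
  | sum_l {s s' : WTy L} (t : WTy L) : Rw s s' → Rw (.sum s t) (.sum s' t)
  | sum_r (s : WTy L) {t t' : WTy L} : Rw t t' → Rw (.sum s t) (.sum s t')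
  | wmon (ℓ : L) {s s' : WTy L} : Rw s s' → Rw (.wmon ℓ s) (.wmon ℓ s')
  | open_ (ℓ : L) {s s' : WTy L} : Rw s s' → Rw (.open_ ℓ s) (.open_ ℓ s')

/-- A type is in normal form when all its subterms of the form `u^ℓ` with
`ℓ ≠ ⊥` have `u` a sum type. -/
def QualOnlyOnSums {L : Type} [SemilatticeSup L] [OrderBot L] : WTy L → Prop
  | .unit => True
  | .fn s t => QualOnlyOnSums s ∧ QualOnlyOnSums t
  | .prod s t => QualOnlyOnSums s ∧ QualOnlyOnSums t
  | .sum s t => QualOnlyOnSums s ∧ QualOnlyOnSums t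
  | .wmon _ s => QualOnlyOnSums s
  | .open_ ℓ s => (ℓ ≠ ⊥ → ∃ a b : WTy L, s = .sum a b) ∧ QualOnlyOnSums s

/-- Termination measure. -/
def mea {L : Type} : WTy L → ℕ
  | .unit => 1
  | .fn s t => mea s + mea t + 1
  | .prod s t => mea s + mea t + 1
  | .sum s t => mea s + mea t + 1
  | .wmon _ s => mea s + 1
  | .open_ _ s => 2 * mea s

theorem mea_pos {L : Type} (t : WTy L) : 0 < mea t := by
  induction t <;> simp [mea] <;> omega

theorem rw_dec {L : Type} [SemilatticeSup L] [OrderBot L] {s t : WTy L}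
    (h : Rw s t) : mea t < mea s := by
  induction h with
  | open_open ℓ ℓ' s => have := mea_pos s; simp [mea]; omega
  | _ => simp_all [mea] <;> omega

/-- the open-type rewriting system is terminating (every
descending rewrite chain is well-founded), and every normal form has
qualifiers only on sum types. -/
theorem open_rewriting_terminates {L : Type} [SemilatticeSup L] [OrderBot L] :
    (∀ t : WTy L, Acc (fun a b : WTy L => Rw b a) t) ∧
    (∀ t : WTy L, (∀ u : WTy L, ¬ Rw t u) → QualOnlyOnSums t) := by
  constructor
  · have wf : WellFounded (fun a b : WTy L => Rw b a) :=
      Subrelation.wf (r := InvImage (· < ·) mea) (fun h => rw_dec h)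
        (InvImage.wf mea Nat.lt_wfRel.wf)
    exact wf.apply
  · intro t
    induction t with
    | unit => intro _; trivial
    | fn s t ihs iht =>
        intro h
        exact ⟨ihs (fun u hu => h _ (Rw.fn_l t hu)),
               iht (fun u hu => h _ (Rw.fn_r s hu))⟩
    | prod s t ihs iht =>
        intro h
        exact ⟨ihs (fun u hu => h _ (Rw.prod_l t hu)),
               iht (fun u hu => h _ (Rw.prod_r s hu))⟩
    | sum s t ihs iht =>
        intro h
        exact ⟨ihs (fun u hu => h _ (Rw.sum_l t hu)),
               iht (fun u hu => h _ (Rw.sum_r s hu))⟩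
    | wmon ℓ s ihs =>
        intro h
        exact ihs (fun u hu => h _ (Rw.wmon ℓ hu))
    | open_ ℓ s ihs =>
        intro h
        refine ⟨fun _ => ?_, ihs (fun u hu => h _ (Rw.open_ ℓ hu))⟩
        cases s with
        | unit => exact absurd (Rw.open_unit ℓ) (h _)
        | fn a b => exact absurd (Rw.open_fn ℓ a b) (h _)
        | prod a b => exact absurd (Rw.open_prod ℓ a b) (h _)
        | sum a b => exact ⟨a, b, rfl⟩
        | wmon ℓ' a => exact absurd (Rw.open_wmon_push ℓ ℓ' a) (h _)
        | open_ ℓ' a => exact absurd (Rw.open_open ℓ' ℓ a) (h _)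
end

section
/- The functions λx. bind y = x in inj_i () (for i ∈ {1,2}) are typable in DCC^{cd} with type T_ℓ(s) → (unit + unit) for every level ℓ and type s, but are not typable in DCC at that type for ℓ ≠ ⊥. -/
/-- DCC^{cd} types: strong monads `T_ℓ` and open types `s^ℓ`. -/
inductive Ty (L : Type) where
  | unit : Ty L
  | fn : Ty L → Ty L → Ty L
  | prod : Ty L → Ty L → Ty L
  | sum : Ty L → Ty L → Ty L
  | mon : L → Ty L → Ty L
  | open_ : L → Ty L → Ty L

/-- Strong protection `ℓ ≼ t` (sum types never protected). -/
inductive ProtS {L : Type} [Lattice L] [BoundedOrder L] : L → Ty L → Prop where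
  | unit (ℓ : L) : ProtS ℓ .unit
  | fn {ℓ : L} {s t : Ty L} : ProtS ℓ t → ProtS ℓ (.fn s t)
  | prod {ℓ : L} {s t : Ty L} : ProtS ℓ s → ProtS ℓ t → ProtS ℓ (.prod s t)
  | mon_le {ℓ ℓ' : L} {s : Ty L} : ℓ ≤ ℓ' → ProtS ℓ (.mon ℓ' s)
  | mon_inner {ℓ ℓ' : L} {s : Ty L} : ProtS ℓ s → ProtS ℓ (.mon ℓ' s)

/-- Weak protection `ℓ ≤ t` (sum clause included; monadic types weakly
protected as in DCC^d; no rule for nontrivial open types). -/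
inductive WProt {L : Type} [Lattice L] [BoundedOrder L] : L → Ty L → Prop where
  | unit (ℓ : L) : WProt ℓ .unit
  | fn {ℓ : L} {s t : Ty L} : WProt ℓ t → WProt ℓ (.fn s t)
  | prod {ℓ : L} {s t : Ty L} : WProt ℓ s → WProt ℓ t → WProt ℓ (.prod s t)
  | sum {ℓ : L} {s t : Ty L} : WProt ℓ s → WProt ℓ t → WProt ℓ (.sum s t)
  | mon_le {ℓ ℓ' : L} {s : Ty L} : ℓ ≤ ℓ' → WProt ℓ (.mon ℓ' s)
  | mon_inner {ℓ ℓ' : L} {s : Ty L} : WProt ℓ s → WProt ℓ (.mon ℓ' s)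

/-- Congruence closure of the open-type equations (through strong monads). -/
inductive TyEq {L : Type} [Lattice L] [BoundedOrder L] : Ty L → Ty L → Prop where
  | refl (s : Ty L) : TyEq s s
  | symm {s t : Ty L} : TyEq s t → TyEq t s
  | trans {s t u : Ty L} : TyEq s t → TyEq t u → TyEq s u
  | fn_congr {s s' t t' : Ty L} : TyEq s s' → TyEq t t' → TyEq (.fn s t) (.fn s' t')
  | prod_congr {s s' t t' : Ty L} : TyEq s s' → TyEq t t' → TyEq (.prod s t) (.prod s' t')
  | sum_congr {s s' t t' : Ty L} : TyEq s s' → TyEq t t' → TyEq (.sum s t) (.sum s' t')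
  | mon_congr (ℓ : L) {s s' : Ty L} : TyEq s s' → TyEq (.mon ℓ s) (.mon ℓ s')
  | open_congr (ℓ : L) {s s' : Ty L} : TyEq s s' → TyEq (.open_ ℓ s) (.open_ ℓ s')
  | open_open (ℓ ℓ' : L) (s : Ty L) :
      TyEq (.open_ ℓ' (.open_ ℓ s)) (.open_ (ℓ ⊔ ℓ') s)
  | open_bot (s : Ty L) : TyEq (.open_ (⊥ : L) s) s
  | open_unit (ℓ : L) : TyEq (.open_ ℓ .unit) .unit
  | open_fn (ℓ : L) (s t : Ty L) : TyEq (.open_ ℓ (.fn s t)) (.fn s (.open_ ℓ t))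
  | open_prod (ℓ : L) (s t : Ty L) :
      TyEq (.open_ ℓ (.prod s t)) (.prod (.open_ ℓ s) (.open_ ℓ t))
  | open_mon_push (ℓ ℓ' : L) (s : Ty L) :
      TyEq (.open_ ℓ (.mon ℓ' s)) (.mon ℓ' (.open_ ℓ s))
  | open_mon_drop (ℓ ℓ' : L) (s : Ty L) (h : ℓ ≤ ℓ') :
      TyEq (.open_ ℓ (.mon ℓ' s)) (.mon ℓ' s)

/-- Terms (de Bruijn; `case` and `bind` bind variable 0). -/
inductive Tm (L : Type) where
  | unit : Tm L
  | var : Nat → Tm L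
  | lam : Tm L → Tm L
  | app : Tm L → Tm L → Tm L
  | pair : Tm L → Tm L → Tm L
  | proj : Bool → Tm L → Tm L
  | inj : Bool → Tm L → Tm L
  | case : Tm L → Tm L → Tm L → Tm L
  | etaS : L → Tm L → Tm L
  | bind : Tm L → Tm L → Tm L

/-- DCC typing `Γ; Π ⊢ e : s`. -/
inductive HTS {L : Type} [Lattice L] [BoundedOrder L] :
    List (Ty L) → L → Tm L → Ty L → Prop where
  | var {Γ : List (Ty L)} {P : L} {n : Nat} {s : Ty L} :
      Γ[n]? = some s → HTS Γ P (.var n) s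
  | unit {Γ : List (Ty L)} {P : L} : HTS Γ P .unit .unit
  | lam {Γ : List (Ty L)} {P : L} {e : Tm L} {s t : Ty L} :
      HTS (s :: Γ) P e t → HTS Γ P (.lam e) (.fn s t)
  | app {Γ : List (Ty L)} {P : L} {e e' : Tm L} {s t : Ty L} :
      HTS Γ P e (.fn s t) → HTS Γ P e' s → HTS Γ P (.app e e') t
  | pair {Γ : List (Ty L)} {P : L} {e₁ e₂ : Tm L} {s₁ s₂ : Ty L} :
      HTS Γ P e₁ s₁ → HTS Γ P e₂ s₂ → HTS Γ P (.pair e₁ e₂) (.prod s₁ s₂)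
  | proj₁ {Γ : List (Ty L)} {P : L} {e : Tm L} {s₁ s₂ : Ty L} :
      HTS Γ P e (.prod s₁ s₂) → HTS Γ P (.proj false e) s₁
  | proj₂ {Γ : List (Ty L)} {P : L} {e : Tm L} {s₁ s₂ : Ty L} :
      HTS Γ P e (.prod s₁ s₂) → HTS Γ P (.proj true e) s₂
  | inj₁ {Γ : List (Ty L)} {P : L} {e : Tm L} {s₁ s₂ : Ty L} :
      HTS Γ P e s₁ → HTS Γ P (.inj false e) (.sum s₁ s₂)
  | inj₂ {Γ : List (Ty L)} {P : L} {e : Tm L} {s₁ s₂ : Ty L} :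
      HTS Γ P e s₂ → HTS Γ P (.inj true e) (.sum s₁ s₂)
  | case {Γ : List (Ty L)} {P : L} {e e₁ e₂ : Tm L} {s₁ s₂ t : Ty L} :
      HTS Γ P e (.sum s₁ s₂) → HTS (s₁ :: Γ) P e₁ t → HTS (s₂ :: Γ) P e₂ t →
      HTS Γ P (.case e e₁ e₂) t
  | ret {Γ : List (Ty L)} {P ℓ : L} {e : Tm L} {s : Ty L} :
      HTS Γ (P ⊔ ℓ) e s → HTS Γ P (.etaS ℓ e) (.mon ℓ s)
  | bind {Γ : List (Ty L)} {P ℓ : L} {e e' : Tm L} {s t : Ty L} :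
      HTS Γ P e (.mon ℓ s) → HTS (s :: Γ) P e' t → ProtS ℓ (.mon P t) →
      HTS Γ P (.bind e e') t

/-- DCC^{cd} typing `Γ; Π; Σ ⊢ e : t`, with protection context `Π` and open
context `Σ`. -/
inductive HTCD {L : Type} [Lattice L] [BoundedOrder L] :
    List (Ty L) → L → L → Tm L → Ty L → Prop where
  | var {Γ : List (Ty L)} {P S : L} {n : Nat} {s : Ty L} :
      Γ[n]? = some s → HTCD Γ P S (.var n) s
  | unit {Γ : List (Ty L)} {P S : L} : HTCD Γ P S .unit .unit
  | lam {Γ : List (Ty L)} {P S : L} {e : Tm L} {s t : Ty L} :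
      HTCD (s :: Γ) P S e t → HTCD Γ P S (.lam e) (.fn s t)
  | app {Γ : List (Ty L)} {P S : L} {e e' : Tm L} {s t : Ty L} :
      HTCD Γ P S e (.fn s t) → HTCD Γ P S e' s → HTCD Γ P S (.app e e') t
  | pair {Γ : List (Ty L)} {P S : L} {e₁ e₂ : Tm L} {s₁ s₂ : Ty L} :
      HTCD Γ P S e₁ s₁ → HTCD Γ P S e₂ s₂ → HTCD Γ P S (.pair e₁ e₂) (.prod s₁ s₂)
  | proj₁ {Γ : List (Ty L)} {P S : L} {e : Tm L} {s₁ s₂ : Ty L} :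
      HTCD Γ P S e (.prod s₁ s₂) → HTCD Γ P S (.proj false e) s₁
  | proj₂ {Γ : List (Ty L)} {P S : L} {e : Tm L} {s₁ s₂ : Ty L} :
      HTCD Γ P S e (.prod s₁ s₂) → HTCD Γ P S (.proj true e) s₂
  | inj₁ {Γ : List (Ty L)} {P S : L} {e : Tm L} {s₁ s₂ : Ty L} :
      HTCD Γ P S e s₁ → HTCD Γ P S (.inj false e) (.sum s₁ s₂)
  | inj₂ {Γ : List (Ty L)} {P S : L} {e : Tm L} {s₁ s₂ : Ty L} :
      HTCD Γ P S e s₂ → HTCD Γ P S (.inj true e) (.sum s₁ s₂)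
  | case {Γ : List (Ty L)} {P S ℓ : L} {e e₁ e₂ : Tm L} {s₁ s₂ t : Ty L} :
      HTCD Γ P S e (.open_ ℓ (.sum s₁ s₂)) →
      (ℓ ≠ ⊥ → ¬ S ≤ ℓ) →
      HTCD (.open_ ℓ s₁ :: Γ) P S e₁ t → HTCD (.open_ ℓ s₂ :: Γ) P S e₂ t →
      HTCD Γ P S (.case e e₁ e₂) t
  | ret {Γ : List (Ty L)} {P S ℓ : L} {e : Tm L} {s : Ty L} :
      HTCD Γ (P ⊔ ℓ) S e s → HTCD Γ P S (.etaS ℓ e) (.mon ℓ s)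
  | bind_old {Γ : List (Ty L)} {P S ℓ : L} {e e' : Tm L} {s t : Ty L} :
      HTCD Γ P S e (.mon ℓ s) → HTCD (s :: Γ) P S e' t →
      ProtS ℓ (.mon P t) → HTCD Γ P S (.bind e e') t
  | bind_new {Γ : List (Ty L)} {P S ℓ : L} {e e' : Tm L} {s t : Ty L} :
      HTCD Γ P S e (.mon ℓ s) → HTCD (.open_ ℓ s :: Γ) P (S ⊓ ℓ) e' t →
      WProt ℓ (.mon P t) → HTCD Γ P S (.bind e e') t
  | conv {Γ : List (Ty L)} {P S : L} {e : Tm L} {s t : Ty L} :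
      HTCD Γ P S e s → TyEq s t → HTCD Γ P S e t

/-- The functions `λx. bind y = x in inj_i ()`. -/
def constInj {L : Type} (i : Bool) : Tm L := .lam (.bind (.var 0) (.inj i .unit))

/-- `λx. bind y = x in inj_i ()` is typable in DCC^{cd} at
`T_ℓ(s) → (unit + unit)` for every `ℓ` and `s`, but not typable in DCC at
that type when `ℓ ≠ ⊥`. -/
theorem constInj_typable_cd_not_dcc {L : Type} [Lattice L] [BoundedOrder L]
    (ℓ : L) (s : Ty L) (i : Bool) :
    HTCD ([] : List (Ty L)) (⊥ : L) (⊤ : L) (constInj i)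
      (.fn (.mon ℓ s) (.sum .unit .unit)) ∧
    (ℓ ≠ ⊥ →
      ¬ HTS ([] : List (Ty L)) (⊥ : L) (constInj i)
          (.fn (.mon ℓ s) (.sum .unit .unit))) := by
  constructor
  · apply HTCD.lam
    apply HTCD.bind_new (ℓ := ℓ) (s := s)
    · exact HTCD.var rfl
    · cases i
      · exact HTCD.inj₁ HTCD.unit
      · exact HTCD.inj₂ HTCD.unit
    · exact WProt.mon_inner (WProt.sum (WProt.unit ℓ) (WProt.unit ℓ))
  · intro hne h
    cases h with
    | lam h =>
      cases h with
      | bind hv hb hp =>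
        cases hv with
        | var hget =>
          simp at hget
          obtain ⟨rfl, rfl⟩ := hget
          cases hp with
          | mon_le hle => exact hne (le_bot_iff.mp hle)
          | mon_inner hs => cases hs
end
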